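/- For every natural number n ≥ 1, the domination polynomial of the graph H_{2n+1} satisfies D(H_{2n+1}, x) = (x³ + 3x² + x)(x⁴ + 4x³ + 6x² + 2x)^n. -/

import Mathlib

open Polynomial

variable {V W : Type*}

/-- `S` is a dominating set of `G`. -/
def Dominates (G : SimpleGraph V) (S : Finset V) : Prop :=
  ∀ v, v ∉ S → ∃ u ∈ S, G.Adj u v

open Classical in
/-- The domination polynomial of a finite simple graph. -/
noncomputable def domPoly [Fintype V] (G : SimpleGraph V) : Polynomial ℤ :=
  ∑ S : Finset V, if Dominates G S then (X : Polynomial ℤ) ^ S.card else 0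

/-- Stevanović's clique cover construction `C{G}`. -/
def cliqueCoverConstruction (G : SimpleGraph V) {k : ℕ} (C : Fin k → Finset V) :
    SimpleGraph (V ⊕ Fin k × Fin 2) where
  Adj x y :=
    match x, y with
    | Sum.inl a, Sum.inl b => G.Adj a b
    | Sum.inl a, Sum.inr (i, _) => a ∈ C i
    | Sum.inr (i, _), Sum.inl a => a ∈ C i
    | Sum.inr _, Sum.inr _ => False
  symm := by
    constructor
    rintro (a | ⟨i, t⟩) (b | ⟨j, s⟩) h
    · exact G.adj_symm h
    · exact h
    · exact h
    · exact h.elim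
  loopless := by
    constructor
    rintro (a | ⟨i, t⟩) h
    · exact G.irrefl h
    · exact h

/-- clique cover of the odd path -/
def oddCover (n : ℕ) : Fin (n + 1) → Finset (Fin (2 * n + 1)) :=
  fun i =>
    if i.val = 0 then {⟨0, by omega⟩}
    else {⟨2 * i.val - 1, by have := i.isLt; omega⟩, ⟨2 * i.val, by have := i.isLt; omega⟩}

/-- The graph `H_{2n+1}`. -/
def H2n1 (n : ℕ) : SimpleGraph (Fin (2 * n + 1) ⊕ Fin (n + 1) × Fin 2) :=
  cliqueCoverConstruction (SimpleGraph.pathGraph (2 * n + 1)) (oddCover n)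

namespace DomH

abbrev Vt (n : ℕ) := Fin (2 * n + 1) ⊕ Fin (n + 1) × Fin 2
abbrev It (n : ℕ) := Fin 3 ⊕ Fin n × Fin 4
abbrev Dt (n : ℕ) := (Bool × Bool × Bool) × (Fin n → Bool × Bool × Bool × Bool)

def eFun (n : ℕ) : It n → Vt n
  | .inl i =>
      if i.val = 0 then .inl ⟨0, by omega⟩
      else .inr (⟨0, by omega⟩, ⟨i.val - 1, by have := i.isLt; omega⟩)
  | .inr (j, k) =>
      if k.val = 0 then .inl ⟨2 * j.val + 1, by have := j.isLt; omega⟩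
      else if k.val = 1 then .inl ⟨2 * j.val + 2, by have := j.isLt; omega⟩
      else .inr (⟨j.val + 1, by have := j.isLt; omega⟩, ⟨k.val - 2, by have := k.isLt; omega⟩)

def eInv (n : ℕ) : Vt n → It n
  | .inl a =>
      if h : a.val = 0 then .inl ⟨0, by omega⟩
      else .inr (⟨(a.val - 1) / 2, by have := a.isLt; omega⟩,
        if (a.val - 1) % 2 = 0 then ⟨0, by omega⟩ else ⟨1, by omega⟩)
  | .inr (i, t) =>
      if h : i.val = 0 then .inl ⟨t.val + 1, by have := t.isLt; omega⟩
      else .inr (⟨i.val - 1, by have := i.isLt; omega⟩, ⟨t.val + 2, by have := t.isLt; omega⟩)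

set_option linter.unnecessarySeqFocus false in
def eEquiv (n : ℕ) : It n ≃ Vt n where
  toFun := eFun n
  invFun := eInv n
  left_inv := by
    rintro (⟨iv, hi⟩ | ⟨⟨jv, hj⟩, ⟨kv, hk⟩⟩)
    · interval_cases iv <;> simp [eFun, eInv]
    · interval_cases kv <;>
        simp [eFun, eInv, Nat.mul_add_div, Fin.ext_iff] <;> omega
  right_inv := by
    rintro (⟨av, ha⟩ | ⟨⟨iv, hi⟩, ⟨tv, ht⟩⟩)
    · by_cases h : av = 0
      · subst h; simp [eFun, eInv]
      · rcases Nat.mod_two_eq_zero_or_one av with he | he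
        · have h2 : (av - 1) % 2 = 1 := by omega
          simp [eFun, eInv, h, h2, Fin.ext_iff]
          omega
        · have h2 : (av - 1) % 2 = 0 := by omega
          simp [eFun, eInv, h, h2, Fin.ext_iff]
          omega
    · by_cases h : iv = 0
      · subst h
        interval_cases tv <;> simp [eFun, eInv]
      · simp [eFun, eInv, h, Fin.ext_iff]
        omega

def memFun (n : ℕ) (d : Dt n) : It n → Bool
  | .inl i => ![d.1.1, d.1.2.1, d.1.2.2] i
  | .inr (j, k) => ![(d.2 j).1, (d.2 j).2.1, (d.2 j).2.2.1, (d.2 j).2.2.2] k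

def Phi (n : ℕ) (d : Dt n) : Finset (Vt n) :=
  Finset.univ.filter (fun v => memFun n d ((eEquiv n).symm v) = true)

lemma mem_Phi (n : ℕ) (d : Dt n) (idx : It n) :
    eEquiv n idx ∈ Phi n d ↔ memFun n d idx = true := by
  simp [Phi]

def Psi (n : ℕ) (S : Finset (Vt n)) : Dt n :=
  ((decide (eEquiv n (.inl 0) ∈ S), decide (eEquiv n (.inl 1) ∈ S),
    decide (eEquiv n (.inl 2) ∈ S)),
   fun j => (decide (eEquiv n (.inr (j, 0)) ∈ S), decide (eEquiv n (.inr (j, 1)) ∈ S),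
    decide (eEquiv n (.inr (j, 2)) ∈ S), decide (eEquiv n (.inr (j, 3)) ∈ S)))

def PhiEquiv (n : ℕ) : Dt n ≃ Finset (Vt n) where
  toFun := Phi n
  invFun := Psi n
  left_inv := by
    intro d
    have h : ∀ idx, decide (eEquiv n idx ∈ Phi n d) = memFun n d idx := by
      intro idx; simp [mem_Phi]
    obtain ⟨⟨a, b, c⟩, G⟩ := d
    refine Prod.ext ?_ ?_
    · exact Prod.ext (h (.inl 0)) (Prod.ext (h (.inl 1)) (h (.inl 2)))
    · funext j
      exact Prod.ext (h (.inr (j, 0))) (Prod.ext (h (.inr (j, 1)))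
        (Prod.ext (h (.inr (j, 2))) (h (.inr (j, 3)))))
  right_inv := by
    intro S
    ext v
    rw [show v = eEquiv n ((eEquiv n).symm v) by simp, mem_Phi]
    rcases (eEquiv n).symm v with ⟨iv, hi⟩ | ⟨j, ⟨kv, hk⟩⟩
    · interval_cases iv <;> simp [Psi, memFun]
    · interval_cases kv <;> simp [Psi, memFun]

lemma PhiEquiv_coe (n : ℕ) : ⇑(PhiEquiv n) = Phi n := rfl

def bnum (b : Bool) : ℕ := if b then 1 else 0
def w3 (a : Bool × Bool × Bool) : ℕ := bnum a.1 + bnum a.2.1 + bnum a.2.2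
def w4 (g : Bool × Bool × Bool × Bool) : ℕ := bnum g.1 + bnum g.2.1 + bnum g.2.2.1 + bnum g.2.2.2

lemma card_Phi (n : ℕ) (d : Dt n) : (Phi n d).card = w3 d.1 + ∑ j, w4 (d.2 j) := by
  rw [Phi, Finset.card_filter]
  rw [← Equiv.sum_comp (eEquiv n)
      (fun v => if memFun n d ((eEquiv n).symm v) = true then 1 else 0)]
  simp only [Equiv.symm_apply_apply]
  rw [Fintype.sum_sum_type, Fintype.sum_prod_type]
  simp only [Fin.sum_univ_three, Fin.sum_univ_four, memFun, Matrix.cons_val_zero,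
    Matrix.cons_val_one, Matrix.head_cons, Matrix.cons_val_two, Matrix.tail_cons,
    Matrix.cons_val_three, w3, w4, bnum]
  rfl

def B0 (a : Bool × Bool × Bool) : Bool := a.1 || (a.2.1 && a.2.2)
def B4 (g : Bool × Bool × Bool × Bool) : Bool := g.1 || g.2.1 || (g.2.2.1 && g.2.2.2)

/- adjacency in H2n1 with a pendant vertex -/
lemma adj_pend (n : ℕ) (i : Fin (n + 1)) (t : Fin 2) (a : Fin (2 * n + 1)) :
    (H2n1 n).Adj (Sum.inr (i, t)) (Sum.inl a) ↔ a ∈ oddCover n i := Iff.rfl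

lemma adj_pend' (n : ℕ) (i : Fin (n + 1)) (t : Fin 2) (a : Fin (2 * n + 1)) :
    (H2n1 n).Adj (Sum.inl a) (Sum.inr (i, t)) ↔ a ∈ oddCover n i := Iff.rfl

lemma adj_path (n : ℕ) (a b : Fin (2 * n + 1)) :
    (H2n1 n).Adj (Sum.inl a) (Sum.inl b) ↔ (SimpleGraph.pathGraph (2 * n + 1)).Adj a b := Iff.rfl

lemma adj_pp (n : ℕ) (i i' : Fin (n + 1)) (t t' : Fin 2) :
    ¬ (H2n1 n).Adj (Sum.inr (i, t)) (Sum.inr (i', t')) := fun h => h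

lemma mem_oddCover (n : ℕ) (i : Fin (n + 1)) (a : Fin (2 * n + 1)) :
    a ∈ oddCover n i ↔
      (i.val = 0 ∧ a.val = 0) ∨ (1 ≤ i.val ∧ (a.val = 2 * i.val - 1 ∨ a.val = 2 * i.val)) := by
  by_cases h : i.val = 0 <;> simp only [oddCover, h, if_true, if_false, Finset.mem_singleton,
    Finset.mem_insert, Fin.ext_iff, Fin.val_mk, ↓reduceIte, true_and, false_and, false_or] <;> omega

lemma dom_iff (n : ℕ) (d : Dt n) :
    Dominates (H2n1 n) (Phi n d) ↔
      (B0 d.1 = true ∧ ∀ j : Fin n, B4 (d.2 j) = true) := by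
  constructor
  · intro hdom
    constructor
    · -- block 0
      rw [B0, Bool.or_eq_true, Bool.and_eq_true]
      by_cases h1 : d.1.1 = true
      · exact Or.inl h1
      · refine Or.inr ⟨?_, ?_⟩
        · by_contra hp
          have hpS : eEquiv n (.inl 1) ∉ Phi n d := by
            rw [mem_Phi]; exact hp
          obtain ⟨u, huS, hadj⟩ := hdom _ hpS
          rcases u with w | ⟨i', t'⟩
          · have hw : w ∈ oddCover n ⟨0, by omega⟩ := hadj
            rw [mem_oddCover] at hw
            have hw0 : w = ⟨0, by omega⟩ := by
              simp only [Fin.ext_iff, Fin.val_mk] at hw ⊢; omega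
            rw [hw0] at huS
            exact h1 ((mem_Phi n d (.inl 0)).1 huS)
          · exact adj_pp n _ _ _ _ hadj
        · by_contra hp
          have hpS : eEquiv n (.inl 2) ∉ Phi n d := by
            rw [mem_Phi]; exact hp
          obtain ⟨u, huS, hadj⟩ := hdom _ hpS
          rcases u with w | ⟨i', t'⟩
          · have hw : w ∈ oddCover n ⟨0, by omega⟩ := hadj
            rw [mem_oddCover] at hw
            have hw0 : w = ⟨0, by omega⟩ := by
              simp only [Fin.ext_iff, Fin.val_mk] at hw ⊢; omega
            rw [hw0] at huS
            exact h1 ((mem_Phi n d (.inl 0)).1 huS)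
          · exact adj_pp n _ _ _ _ hadj
    · -- blocks j
      intro j
      rw [B4, Bool.or_eq_true, Bool.or_eq_true, Bool.and_eq_true]
      by_cases h1 : (d.2 j).1 = true
      · exact Or.inl (Or.inl h1)
      by_cases h2 : (d.2 j).2.1 = true
      · exact Or.inl (Or.inr h2)
      refine Or.inr ⟨?_, ?_⟩
      · by_contra hp
        have hpS : eEquiv n (.inr (j, 2)) ∉ Phi n d := by
          rw [mem_Phi]; exact hp
        obtain ⟨u, huS, hadj⟩ := hdom _ hpS
        rcases u with w | ⟨i', t'⟩
        · have hw : w ∈ oddCover n ⟨j.val + 1, by have := j.isLt; omega⟩ := hadj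
          rw [mem_oddCover] at hw
          rcases Nat.lt_or_ge w.val (2 * j.val + 2) with hlt | hge
          · have hw0 : w = (⟨2 * j.val + 1, by have := j.isLt; omega⟩ : Fin (2 * n + 1)) := by
              simp only [Fin.ext_iff, Fin.val_mk] at hw ⊢; omega
            rw [hw0] at huS
            exact h1 ((mem_Phi n d (.inr (j, 0))).1 huS)
          · have hw0 : w = (⟨2 * j.val + 2, by have := j.isLt; omega⟩ : Fin (2 * n + 1)) := by
              simp only [Fin.ext_iff, Fin.val_mk] at hw ⊢; omega
            rw [hw0] at huS
            exact h2 ((mem_Phi n d (.inr (j, 1))).1 huS)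
        · exact adj_pp n _ _ _ _ hadj
      · by_contra hp
        have hpS : eEquiv n (.inr (j, 3)) ∉ Phi n d := by
          rw [mem_Phi]; exact hp
        obtain ⟨u, huS, hadj⟩ := hdom _ hpS
        rcases u with w | ⟨i', t'⟩
        · have hw : w ∈ oddCover n ⟨j.val + 1, by have := j.isLt; omega⟩ := hadj
          rw [mem_oddCover] at hw
          rcases Nat.lt_or_ge w.val (2 * j.val + 2) with hlt | hge
          · have hw0 : w = (⟨2 * j.val + 1, by have := j.isLt; omega⟩ : Fin (2 * n + 1)) := by
              simp only [Fin.ext_iff, Fin.val_mk] at hw ⊢; omega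
            rw [hw0] at huS
            exact h1 ((mem_Phi n d (.inr (j, 0))).1 huS)
          · have hw0 : w = (⟨2 * j.val + 2, by have := j.isLt; omega⟩ : Fin (2 * n + 1)) := by
              simp only [Fin.ext_iff, Fin.val_mk] at hw ⊢; omega
            rw [hw0] at huS
            exact h2 ((mem_Phi n d (.inr (j, 1))).1 huS)
        · exact adj_pp n _ _ _ _ hadj
  · rintro ⟨h0, hall⟩ v hv
    obtain ⟨idx, rfl⟩ := (eEquiv n).surjective v
    rw [mem_Phi] at hv
    rw [B0, Bool.or_eq_true, Bool.and_eq_true] at h0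
    rcases idx with ⟨iv, hi⟩ | ⟨j, ⟨kv, hk⟩⟩
    · interval_cases iv
      · -- v = v0, not in S
        have h1 : ¬ d.1.1 = true := hv
        rcases h0 with h0 | ⟨hp, hq⟩
        · exact absurd h0 h1
        · refine ⟨eEquiv n (.inl 1), (mem_Phi n d (.inl 1)).2 hp, ?_⟩
          exact (mem_oddCover n _ _).2 (Or.inl ⟨rfl, rfl⟩)
      · -- v = pendant p0
        have h1 : ¬ d.1.2.1 = true := hv
        rcases h0 with h0 | ⟨hp, hq⟩
        · refine ⟨eEquiv n (.inl 0), (mem_Phi n d (.inl 0)).2 h0, ?_⟩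
          exact (mem_oddCover n _ _).2 (Or.inl ⟨rfl, rfl⟩)
        · exact absurd hp h1
      · -- v = pendant q0
        have h1 : ¬ d.1.2.2 = true := hv
        rcases h0 with h0 | ⟨hp, hq⟩
        · refine ⟨eEquiv n (.inl 0), (mem_Phi n d (.inl 0)).2 h0, ?_⟩
          exact (mem_oddCover n _ _).2 (Or.inl ⟨rfl, rfl⟩)
        · exact absurd hq h1
    · have hj := hall j
      rw [B4, Bool.or_eq_true, Bool.or_eq_true, Bool.and_eq_true] at hj
      interval_cases kv
      · -- v = v_{2j+1}
        have h1 : ¬ (d.2 j).1 = true := hv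
        rcases hj with (ha | hb) | ⟨hp, hq⟩
        · exact absurd ha h1
        · refine ⟨eEquiv n (.inr (j, 1)), (mem_Phi n d (.inr (j, 1))).2 hb, ?_⟩
          show (SimpleGraph.pathGraph (2 * n + 1)).Adj
            ⟨2 * j.val + 2, by have := j.isLt; omega⟩ ⟨2 * j.val + 1, by have := j.isLt; omega⟩
          rw [SimpleGraph.pathGraph_adj]
          simp
        · refine ⟨eEquiv n (.inr (j, 2)), (mem_Phi n d (.inr (j, 2))).2 hp, ?_⟩
          refine (mem_oddCover n _ _).2
            (Or.inr ⟨by simp only [Fin.val_mk]; omega, by simp only [Fin.val_mk]; omega⟩)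
      · -- v = v_{2j+2}
        have h1 : ¬ (d.2 j).2.1 = true := hv
        rcases hj with (ha | hb) | ⟨hp, hq⟩
        · refine ⟨eEquiv n (.inr (j, 0)), (mem_Phi n d (.inr (j, 0))).2 ha, ?_⟩
          show (SimpleGraph.pathGraph (2 * n + 1)).Adj
            ⟨2 * j.val + 1, by have := j.isLt; omega⟩ ⟨2 * j.val + 2, by have := j.isLt; omega⟩
          rw [SimpleGraph.pathGraph_adj]
          simp
        · exact absurd hb h1
        · refine ⟨eEquiv n (.inr (j, 2)), (mem_Phi n d (.inr (j, 2))).2 hp, ?_⟩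
          refine (mem_oddCover n _ _).2
            (Or.inr ⟨by simp only [Fin.val_mk]; omega, by simp only [Fin.val_mk]; omega⟩)
      · -- v = pendant p_j
        have h1 : ¬ (d.2 j).2.2.1 = true := hv
        rcases hj with (ha | hb) | ⟨hp, hq⟩
        · refine ⟨eEquiv n (.inr (j, 0)), (mem_Phi n d (.inr (j, 0))).2 ha, ?_⟩
          refine (mem_oddCover n _ _).2
            (Or.inr ⟨by simp only [Fin.val_mk]; omega, by simp only [Fin.val_mk]; omega⟩)
        · refine ⟨eEquiv n (.inr (j, 1)), (mem_Phi n d (.inr (j, 1))).2 hb, ?_⟩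
          refine (mem_oddCover n _ _).2
            (Or.inr ⟨by simp only [Fin.val_mk]; omega, by simp only [Fin.val_mk]; omega⟩)
        · exact absurd hp h1
      · -- v = pendant q_j
        have h1 : ¬ (d.2 j).2.2.2 = true := hv
        rcases hj with (ha | hb) | ⟨hp, hq⟩
        · refine ⟨eEquiv n (.inr (j, 0)), (mem_Phi n d (.inr (j, 0))).2 ha, ?_⟩
          refine (mem_oddCover n _ _).2
            (Or.inr ⟨by simp only [Fin.val_mk]; omega, by simp only [Fin.val_mk]; omega⟩)
        · refine ⟨eEquiv n (.inr (j, 1)), (mem_Phi n d (.inr (j, 1))).2 hb, ?_⟩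
          refine (mem_oddCover n _ _).2
            (Or.inr ⟨by simp only [Fin.val_mk]; omega, by simp only [Fin.val_mk]; omega⟩)
        · exact absurd hq h1

lemma T3eval : ∑ a : Bool × Bool × Bool, (if B0 a = true then (X : Polynomial ℤ) ^ w3 a else 0)
    = X ^ 3 + 3 * X ^ 2 + X := by
  simp [Fintype.sum_prod_type, Fintype.sum_bool, B0, w3, bnum]
  ring

lemma T4eval : ∑ g : Bool × Bool × Bool × Bool,
      (if B4 g = true then (X : Polynomial ℤ) ^ w4 g else 0)
    = X ^ 4 + 4 * X ^ 3 + 6 * X ^ 2 + 2 * X := by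
  simp [Fintype.sum_prod_type, Fintype.sum_bool, B4, w4, bnum]
  ring

end DomH

set_option maxHeartbeats 1000000 in
open DomH in
/-- The domination polynomial of `H_{2n+1}`. -/
theorem domPoly_H2n1 (n : ℕ) (hn : 1 ≤ n) :
    domPoly (H2n1 n) =
      (X ^ 3 + 3 * X ^ 2 + X) * (X ^ 4 + 4 * X ^ 3 + 6 * X ^ 2 + 2 * X) ^ n := by
  classical
  have key : ∀ d : Dt n,
      (if Dominates (H2n1 n) (Phi n d) then (X : Polynomial ℤ) ^ (Phi n d).card else 0)
        = (if B0 d.1 = true then (X : Polynomial ℤ) ^ w3 d.1 else 0)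
          * ∏ j, (if B4 (d.2 j) = true then (X : Polynomial ℤ) ^ w4 (d.2 j) else 0) := by
    intro d
    by_cases h0 : B0 d.1 = true
    · by_cases hall : ∀ j, B4 (d.2 j) = true
      · rw [if_pos ((dom_iff n d).2 ⟨h0, hall⟩), if_pos h0, card_Phi, pow_add]
        congr 1
        rw [← Finset.prod_pow_eq_pow_sum]
        exact Finset.prod_congr rfl fun j _ => (if_pos (hall j)).symm
      · rw [if_neg (fun hd => hall ((dom_iff n d).1 hd).2)]
        push_neg at hall
        obtain ⟨j, hj⟩ := hall
        have hz : (∏ j' : Fin n, if B4 (d.2 j') = true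
            then (X : Polynomial ℤ) ^ w4 (d.2 j') else 0) = 0 :=
          Finset.prod_eq_zero (Finset.mem_univ j) (if_neg hj)
        rw [hz, mul_zero]
    · rw [if_neg (fun hd => h0 ((dom_iff n d).1 hd).1), if_neg h0, zero_mul]
  unfold domPoly
  rw [← Equiv.sum_comp (PhiEquiv n)
      (fun S => if Dominates (H2n1 n) S then (X : Polynomial ℤ) ^ S.card else 0)]
  simp only [PhiEquiv_coe]
  refine (Finset.sum_congr rfl (fun d _ => key d)).trans ?_
  rw [Fintype.sum_prod_type]
  simp_rw [← Finset.mul_sum]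
  rw [← Finset.sum_mul,
    show (∑ G : Fin n → Bool × Bool × Bool × Bool,
        ∏ x : Fin n, if B4 (G x) = true then (X : Polynomial ℤ) ^ w4 (G x) else 0)
      = (∑ g : Bool × Bool × Bool × Bool,
          if B4 g = true then (X : Polynomial ℤ) ^ w4 g else 0) ^ n
      from (Fintype.sum_pow (fun g : Bool × Bool × Bool × Bool => if B4 g = true then (X : Polynomial ℤ) ^ w4 g else 0) n).symm,
    T3eval, T4eval]
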